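/- Let {A_α} be a finite family of operators on a finite-dimensional Hilbert space with Σ_α A_α†A_α ⪯ I, and let ℱ(X) = Σ_α A_α X A_α†. If ℱ has an eigenvalue of modulus 1, then there exists a nonzero positive semi-definite σ with ℱ(σ) = σ. -/

import Mathlib

open Matrix
open scoped ComplexOrder

namespace Matrix.PosSemidef

open scoped MatrixOrder in
/-- square root of a PSD matrix (port helper). -/
noncomputable def sqrt {n : Type*} [Fintype n] [DecidableEq n] {A : Matrix n n ℂ}
    (_ : A.PosSemidef) : Matrix n n ℂ := CFC.sqrt A

open scoped MatrixOrder in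
lemma posSemidef_sqrt {n : Type*} [Fintype n] [DecidableEq n] {A : Matrix n n ℂ}
    (hA : A.PosSemidef) : hA.sqrt.PosSemidef := (CFC.sqrt_nonneg A).posSemidef

open scoped MatrixOrder in
lemma sqrt_mul_self {n : Type*} [Fintype n] [DecidableEq n] {A : Matrix n n ℂ}
    (hA : A.PosSemidef) : hA.sqrt * hA.sqrt = A := CFC.sqrt_mul_sqrt_self A hA.nonneg

end Matrix.PosSemidef

attribute [local instance] Matrix.normedAddCommGroup Matrix.normedSpace

namespace Stmt11Aux

open Complex Finset

/-- Complex Cauchy–Schwarz over a fintype. -/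
lemma cs_sum {ι : Type*} [Fintype ι] (f g : ι → ℂ) :
    ‖∑ i, (starRingEnd ℂ) (f i) * g i‖ ^ 2 ≤ (∑ i, ‖f i‖ ^ 2) * (∑ i, ‖g i‖ ^ 2) := by
  have h1 : ‖∑ i, (starRingEnd ℂ) (f i) * g i‖ ≤ ∑ i, ‖f i‖ * ‖g i‖ := by
    refine (norm_sum_le _ _).trans ?_
    refine Finset.sum_le_sum fun i _ => ?_
    rw [norm_mul, RCLike.norm_conj]
  calc ‖∑ i, (starRingEnd ℂ) (f i) * g i‖ ^ 2
      ≤ (∑ i, ‖f i‖ * ‖g i‖) ^ 2 := by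
        exact pow_le_pow_left₀ (norm_nonneg _) h1 2
    _ ≤ _ := Finset.sum_mul_sq_le_sq_mul_sq _ _ _

lemma sum_conj_mul_self {ι : Type*} [Fintype ι] (y : ι → ℂ) :
    ∑ i, (starRingEnd ℂ) (y i) * y i = ((∑ i, ‖y i‖ ^ 2 : ℝ) : ℂ) := by
  push_cast
  refine Finset.sum_congr rfl fun i _ => ?_
  rw [RCLike.conj_mul]
  norm_num

/-- trace of a product of two PSD matrices is nonnegative. -/
lemma trace_mul_psd_nonneg {n : Type*} [Fintype n] [DecidableEq n]
    {Q M : Matrix n n ℂ} (hQ : Q.PosSemidef) (hM : M.PosSemidef) :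
    0 ≤ (Q * M).trace := by
  have h2 : (Q * M).trace = (hQ.sqrt * M * hQ.sqrt).trace := by
    conv_lhs => rw [← hQ.sqrt_mul_self]
    rw [mul_assoc, trace_mul_comm]
  have hps : (hQ.sqrt * M * hQ.sqrt).PosSemidef := by
    have := hM.mul_mul_conjTranspose_same hQ.sqrt
    rwa [hQ.posSemidef_sqrt.isHermitian.eq] at this
  rw [h2, Matrix.trace]
  refine Finset.sum_nonneg fun i _ => ?_
  simpa [Matrix.mulVec_single, dotProduct, Pi.single_apply] using hps.dotProduct_mulVec_nonneg (Pi.single i 1)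


lemma diag_nonneg {n : Type*} [Fintype n] [DecidableEq n]
    {S : Matrix n n ℂ} (hS : S.PosSemidef) (i : n) : 0 ≤ S i i := by
  simpa [Matrix.mulVec_single, dotProduct, Pi.single_apply] using hS.dotProduct_mulVec_nonneg (Pi.single i 1)

lemma trace_psd_nonneg {n : Type*} [Fintype n] [DecidableEq n]
    {S : Matrix n n ℂ} (hS : S.PosSemidef) : 0 ≤ S.trace := by
  rw [Matrix.trace]
  exact Finset.sum_nonneg fun i _ => diag_nonneg hS i

lemma trace_real {n : Type*} [Fintype n] {S : Matrix n n ℂ} (hS : S.IsHermitian) :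
    ((S.trace.re : ℝ) : ℂ) = S.trace := by
  have h := Matrix.trace_conjTranspose S
  rw [hS.eq] at h
  have him : S.trace.im = 0 := by
    have := congrArg Complex.im h
    simp at this
    linarith
  exact Complex.ext (by simp) (by simp [him])

/-- quadratic form of a PSD matrix is at most `re trace * ‖x‖²`. -/
lemma quad_le {n : Type*} [Fintype n] [DecidableEq n]
    {H : Matrix n n ℂ} (hH : H.PosSemidef) (x : n → ℂ) :
    (dotProduct (star x) (H *ᵥ x)).re ≤ H.trace.re * ∑ p, ‖x p‖ ^ 2 := by
  set R := hH.sqrt with hR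
  have hRH : R.IsHermitian := hH.posSemidef_sqrt.isHermitian
  have hRR : R * R = H := hH.sqrt_mul_self
  have key : dotProduct (star x) (H *ᵥ x)
      = ((∑ i, ‖(R *ᵥ x) i‖ ^ 2 : ℝ) : ℂ) := by
    rw [← sum_conj_mul_self]
    have : dotProduct (star x) (H *ᵥ x) = dotProduct (star (R *ᵥ x)) (R *ᵥ x) := by
      rw [Matrix.star_mulVec, ← Matrix.dotProduct_mulVec, hRH.eq,
        Matrix.mulVec_mulVec, hRR]
    rw [this]
    simp [dotProduct]
  rw [key, Complex.ofReal_re]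
  have hb : ∀ i, ‖(R *ᵥ x) i‖ ^ 2 ≤ (∑ p, ‖R i p‖ ^ 2) * ∑ p, ‖x p‖ ^ 2 := by
    intro i
    have : (R *ᵥ x) i = ∑ p, (starRingEnd ℂ) ((starRingEnd ℂ) (R i p)) * x p := by
      simp [Matrix.mulVec, dotProduct]
    rw [this]
    simpa using cs_sum (fun p => (starRingEnd ℂ) (R i p)) x
  have hsym : ∀ j p, R p j = (starRingEnd ℂ) (R j p) := by
    intro j p
    have := congrFun (congrFun hRH.eq p) j
    simpa [Matrix.conjTranspose_apply] using this.symm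
  have htr : H.trace = ((∑ i, ∑ p, ‖R i p‖ ^ 2 : ℝ) : ℂ) := by
    have h1 : H.trace = ∑ j, ∑ p, (starRingEnd ℂ) (R j p) * R j p := by
      rw [← hRR, Matrix.trace]
      refine Finset.sum_congr rfl fun j _ => ?_
      rw [Matrix.diag_apply, Matrix.mul_apply]
      exact Finset.sum_congr rfl fun p _ => by rw [hsym j p]; ring
    rw [h1]
    push_cast
    refine Finset.sum_congr rfl fun j _ => ?_
    rw [sum_conj_mul_self]
    push_cast
    rfl
  have htr' : H.trace.re = ∑ i, ∑ p, ‖R i p‖ ^ 2 := by rw [htr, Complex.ofReal_re]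
  calc (∑ i, ‖(R *ᵥ x) i‖ ^ 2)
      ≤ ∑ i, (∑ p, ‖R i p‖ ^ 2) * ∑ p, ‖x p‖ ^ 2 := Finset.sum_le_sum fun i _ => hb i
    _ = (∑ i, ∑ p, ‖R i p‖ ^ 2) * ∑ p, ‖x p‖ ^ 2 := by rw [← Finset.sum_mul]
    _ = H.trace.re * ∑ p, ‖x p‖ ^ 2 := by rw [htr']


lemma smul_one_sub_psd {n : Type*} [Fintype n] [DecidableEq n]
    {H : Matrix n n ℂ} (hH : H.PosSemidef) :
    (H.trace • (1 : Matrix n n ℂ) - H).PosSemidef := by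
  have htreal := trace_real hH.1
  refine Matrix.PosSemidef.of_dotProduct_mulVec_nonneg ?_ ?_
  · have htr : star H.trace = H.trace := by
      have h := Matrix.trace_conjTranspose H
      rw [hH.1.eq] at h
      exact h.symm
    simp [Matrix.IsHermitian, Matrix.conjTranspose_smul, hH.1.eq, htr]
  · intro x
    have hxx : dotProduct (star x) x = ((∑ p, ‖x p‖ ^ 2 : ℝ) : ℂ) := by
      rw [← sum_conj_mul_self]
      simp [dotProduct]
    have h1 : dotProduct (star x) ((H.trace • 1 - H) *ᵥ x)
        = H.trace * ((∑ p, ‖x p‖ ^ 2 : ℝ) : ℂ) - dotProduct (star x) (H *ᵥ x) := by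
      rw [Matrix.sub_mulVec, Matrix.smul_mulVec, Matrix.one_mulVec,
        dotProduct_sub, dotProduct_smul, smul_eq_mul, hxx]
    rw [h1]
    have hq := hH.dotProduct_mulVec_nonneg x
    obtain ⟨hqre, hqim⟩ := Complex.nonneg_iff.mp hq
    have hqeq : dotProduct (star x) (H *ᵥ x)
        = (((dotProduct (star x) (H *ᵥ x)).re : ℝ) : ℂ) :=
      Complex.ext (by simp) (by simp [← hqim])
    rw [← htreal, hqeq]
    have hcast : (((H.trace.re : ℝ) : ℂ) * ((∑ p, ‖x p‖ ^ 2 : ℝ) : ℂ)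
        - (((dotProduct (star x) (H *ᵥ x)).re : ℝ) : ℂ))
        = (((H.trace.re * ∑ p, ‖x p‖ ^ 2 - (dotProduct (star x) (H *ᵥ x)).re : ℝ)) : ℂ) := by
      push_cast; ring
    rw [hcast]
    rw [Complex.zero_le_real]
    have := quad_le hH x
    linarith

lemma trace_mul_le {n : Type*} [Fintype n] [DecidableEq n]
    {H W : Matrix n n ℂ} (hH : H.PosSemidef) (hW : W.PosSemidef) :
    ((H * W).trace).re ≤ H.trace.re * W.trace.re := by
  have h0 := trace_mul_psd_nonneg (smul_one_sub_psd hH) hW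
  have hexp : ((H.trace • 1 - H) * W).trace = H.trace * W.trace - (H * W).trace := by
    rw [Matrix.sub_mul, Matrix.smul_mul, Matrix.one_mul, Matrix.trace_sub,
      Matrix.trace_smul, smul_eq_mul]
  rw [hexp] at h0
  have h1 := (Complex.nonneg_iff.mp h0).1
  have htreal := trace_real hH.1
  rw [← htreal] at h1
  simp only [Complex.sub_re, Complex.mul_re, Complex.ofReal_re, Complex.ofReal_im,
    Complex.zero_re, zero_mul, sub_zero] at h1
  linarith


variable {k : ℕ}

/-- The CP map with Kraus operators `B`. -/
noncomputable def cp {n : Type*} [Fintype n] (B : Fin k → Matrix n n ℂ) (Z : Matrix n n ℂ) :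
    Matrix n n ℂ :=
  ∑ α, B α * Z * (B α)ᴴ

lemma cp_psd {n : Type*} [Fintype n] [DecidableEq n] (B : Fin k → Matrix n n ℂ)
    {Z : Matrix n n ℂ} (hZ : Z.PosSemidef) : (cp B Z).PosSemidef := by
  refine Finset.sum_induction _ _ (fun a b ha hb => ha.add hb) Matrix.PosSemidef.zero ?_
  exact fun α _ => hZ.mul_mul_conjTranspose_same (B α)

lemma cp_iter_psd {n : Type*} [Fintype n] [DecidableEq n] (B : Fin k → Matrix n n ℂ)
    {Z : Matrix n n ℂ} (hZ : Z.PosSemidef) (N : ℕ) : ((cp B)^[N] Z).PosSemidef := by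
  induction N with
  | zero => exact hZ
  | succ N ih => rw [Function.iterate_succ_apply']; exact cp_psd B ih

lemma cp_smul {n : Type*} [Fintype n] (B : Fin k → Matrix n n ℂ) (c : ℂ)
    (Z : Matrix n n ℂ) : cp B (c • Z) = c • cp B Z := by
  unfold cp
  rw [Finset.smul_sum]
  refine Finset.sum_congr rfl fun α _ => ?_
  rw [Matrix.mul_smul, Matrix.smul_mul]

lemma cp_add {n : Type*} [Fintype n] (B : Fin k → Matrix n n ℂ)
    (Z W : Matrix n n ℂ) : cp B (Z + W) = cp B Z + cp B W := by
  unfold cp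
  rw [← Finset.sum_add_distrib]
  refine Finset.sum_congr rfl fun α _ => ?_
  rw [Matrix.mul_add, Matrix.add_mul]

lemma sum_fromBlocks {n : Type*} [Fintype n] {ι : Type*} (s : Finset ι)
    (f g h l : ι → Matrix n n ℂ) :
    (∑ α ∈ s, Matrix.fromBlocks (f α) (g α) (h α) (l α)) =
      Matrix.fromBlocks (∑ α ∈ s, f α) (∑ α ∈ s, g α) (∑ α ∈ s, h α) (∑ α ∈ s, l α) := by
  ext (i | i) (j | j) <;> simp [Matrix.sum_apply]

lemma cp_block {n : Type*} [Fintype n] (B : Fin k → Matrix n n ℂ)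
    (P Q R S : Matrix n n ℂ) :
    cp (fun α => Matrix.fromBlocks (B α) 0 0 (B α)) (Matrix.fromBlocks P Q R S) =
      Matrix.fromBlocks (cp B P) (cp B Q) (cp B R) (cp B S) := by
  unfold cp
  rw [← sum_fromBlocks]
  refine Finset.sum_congr rfl fun α _ => ?_
  rw [Matrix.fromBlocks_conjTranspose, Matrix.fromBlocks_multiply,
    Matrix.fromBlocks_multiply]
  simp

lemma cp_iter_block {n : Type*} [Fintype n] (B : Fin k → Matrix n n ℂ)
    (P Q R S : Matrix n n ℂ) (N : ℕ) :
    (cp (fun α => Matrix.fromBlocks (B α) 0 0 (B α)))^[N] (Matrix.fromBlocks P Q R S) =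
      Matrix.fromBlocks ((cp B)^[N] P) ((cp B)^[N] Q) ((cp B)^[N] R) ((cp B)^[N] S) := by
  induction N with
  | zero => rfl
  | succ N ih =>
      rw [Function.iterate_succ_apply', Function.iterate_succ_apply',
        Function.iterate_succ_apply', Function.iterate_succ_apply',
        Function.iterate_succ_apply', ih, cp_block]


lemma cp_trace_le {n : Type*} [Fintype n] [DecidableEq n] (B : Fin k → Matrix n n ℂ)
    (hsub : ((1 : Matrix n n ℂ) - ∑ α, (B α)ᴴ * B α).PosSemidef)
    {Z : Matrix n n ℂ} (hZ : Z.PosSemidef) : (cp B Z).trace.re ≤ Z.trace.re := by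
  have h1 : (cp B Z).trace = ((∑ α, (B α)ᴴ * B α) * Z).trace := by
    unfold cp
    rw [Matrix.trace_sum, Finset.sum_mul, Matrix.trace_sum]
    exact Finset.sum_congr rfl fun α _ => Matrix.trace_mul_cycle (B α) Z (B α)ᴴ
  have h0 := trace_mul_psd_nonneg hsub hZ
  have hexp : (((1 : Matrix n n ℂ) - ∑ α, (B α)ᴴ * B α) * Z).trace
      = Z.trace - ((∑ α, (B α)ᴴ * B α) * Z).trace := by
    rw [Matrix.sub_mul, Matrix.one_mul, Matrix.trace_sub]
  rw [hexp] at h0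
  have h2 := (Complex.nonneg_iff.mp h0).1
  rw [h1]
  simp only [Complex.sub_re] at h2
  linarith

lemma cp_iter_trace_le {n : Type*} [Fintype n] [DecidableEq n] (B : Fin k → Matrix n n ℂ)
    (hsub : ((1 : Matrix n n ℂ) - ∑ α, (B α)ᴴ * B α).PosSemidef)
    {Z : Matrix n n ℂ} (hZ : Z.PosSemidef) (N : ℕ) :
    ((cp B)^[N] Z).trace.re ≤ Z.trace.re := by
  induction N with
  | zero => exact le_rfl
  | succ N ih =>
      rw [Function.iterate_succ_apply']
      exact le_trans (cp_trace_le B hsub (cp_iter_psd B hZ N)) ih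


lemma key_cs {m : ℕ} {M : Matrix (Fin m ⊕ Fin m) (Fin m ⊕ Fin m) ℂ} (hM : M.PosSemidef)
    (X : Matrix (Fin m) (Fin m) ℂ) :
    ‖(Xᴴ * M.toBlocks₁₂).trace‖ ^ 2 ≤
      (Xᴴ * M.toBlocks₁₁ * X).trace.re * M.toBlocks₂₂.trace.re := by
  set R := hM.sqrt with hRdef
  have hRH : R.IsHermitian := hM.posSemidef_sqrt.isHermitian
  have hRR : R * R = M := hM.sqrt_mul_self
  set u : Fin m → (Fin m ⊕ Fin m) → ℂ := fun j => Sum.elim (fun p => X p j) 0 with hu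
  set v : Fin m → (Fin m ⊕ Fin m) → ℂ := fun j => Sum.elim 0 (Pi.single j 1) with hv
  have dot : ∀ a b : (Fin m ⊕ Fin m) → ℂ,
      (∑ i, (starRingEnd ℂ) ((R *ᵥ a) i) * ((R *ᵥ b) i)) = dotProduct (star a) (M *ᵥ b) := by
    intro a b
    have h1 : (∑ i, (starRingEnd ℂ) ((R *ᵥ a) i) * ((R *ᵥ b) i))
        = dotProduct (star (R *ᵥ a)) (R *ᵥ b) := by
      simp [dotProduct]
    rw [h1, Matrix.star_mulVec, ← Matrix.dotProduct_mulVec, hRH.eq,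
      Matrix.mulVec_mulVec, hRR]
  have sum_uv : ∑ j, dotProduct (star (u j)) (M *ᵥ v j) = (Xᴴ * M.toBlocks₁₂).trace := by
    rw [Matrix.trace]
    refine Finset.sum_congr rfl fun j _ => ?_
    simp [hu, hv, dotProduct, Matrix.mulVec, Fintype.sum_sum_type, Pi.single_apply,
      mul_ite, Matrix.diag_apply, Matrix.mul_apply, Matrix.conjTranspose_apply,
      Matrix.toBlocks₁₂]
  have sum_uu : ∑ j, dotProduct (star (u j)) (M *ᵥ u j)
      = (Xᴴ * M.toBlocks₁₁ * X).trace := by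
    rw [Matrix.trace]
    refine Finset.sum_congr rfl fun j _ => ?_
    simp only [hu, Matrix.diag_apply, Matrix.mul_apply, Matrix.conjTranspose_apply,
      Matrix.toBlocks₁₁, Matrix.of_apply, dotProduct, Matrix.mulVec,
      Fintype.sum_sum_type, Sum.elim_inl, Sum.elim_inr, Pi.zero_apply, Pi.star_apply,
      star_zero, zero_mul, mul_zero, add_zero, zero_add, Finset.sum_const_zero]
    simp_rw [Finset.mul_sum, Finset.sum_mul]
    rw [Finset.sum_comm]
    exact Finset.sum_congr rfl fun p _ => Finset.sum_congr rfl fun q _ => by ring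
  have sum_vv : ∑ j, dotProduct (star (v j)) (M *ᵥ v j) = M.toBlocks₂₂.trace := by
    rw [Matrix.trace]
    refine Finset.sum_congr rfl fun j _ => ?_
    simp [hv, dotProduct, Matrix.mulVec, Fintype.sum_sum_type, Pi.single_apply,
      mul_ite, Matrix.diag_apply, Matrix.toBlocks₂₂]
  have e1 : ∑ q : Fin m × (Fin m ⊕ Fin m),
      (starRingEnd ℂ) ((R *ᵥ u q.1) q.2) * ((R *ᵥ v q.1) q.2)
      = (Xᴴ * M.toBlocks₁₂).trace := by
    rw [← sum_uv, Fintype.sum_prod_type]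
    exact Finset.sum_congr rfl fun j _ => dot (u j) (v j)
  have e2c : (((∑ q : Fin m × (Fin m ⊕ Fin m), ‖(R *ᵥ u q.1) q.2‖ ^ 2 : ℝ)) : ℂ)
      = (Xᴴ * M.toBlocks₁₁ * X).trace := by
    rw [← sum_uu, Fintype.sum_prod_type]
    push_cast
    refine Finset.sum_congr rfl fun j _ => ?_
    rw [← dot (u j) (u j), sum_conj_mul_self]
    push_cast
    rfl
  have e3c : (((∑ q : Fin m × (Fin m ⊕ Fin m), ‖(R *ᵥ v q.1) q.2‖ ^ 2 : ℝ)) : ℂ)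
      = M.toBlocks₂₂.trace := by
    rw [← sum_vv, Fintype.sum_prod_type]
    push_cast
    refine Finset.sum_congr rfl fun j _ => ?_
    rw [← dot (v j) (v j), sum_conj_mul_self]
    push_cast
    rfl
  have e2 : (∑ q : Fin m × (Fin m ⊕ Fin m), ‖(R *ᵥ u q.1) q.2‖ ^ 2)
      = (Xᴴ * M.toBlocks₁₁ * X).trace.re := by rw [← e2c, Complex.ofReal_re]
  have e3 : (∑ q : Fin m × (Fin m ⊕ Fin m), ‖(R *ᵥ v q.1) q.2‖ ^ 2)
      = M.toBlocks₂₂.trace.re := by rw [← e3c, Complex.ofReal_re]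
  have := cs_sum (fun q : Fin m × (Fin m ⊕ Fin m) => (R *ᵥ u q.1) q.2)
    (fun q : Fin m × (Fin m ⊕ Fin m) => (R *ᵥ v q.1) q.2)
  rw [e1, e2, e3] at this
  exact this


lemma trace_mul_self_herm {n : Type*} [Fintype n] {R : Matrix n n ℂ}
    (hRH : R.IsHermitian) :
    (R * R).trace = ((∑ i, ∑ p, ‖R i p‖ ^ 2 : ℝ) : ℂ) := by
  have hsym : ∀ j p, R p j = (starRingEnd ℂ) (R j p) := by
    intro j p
    have := congrFun (congrFun hRH.eq p) j
    simpa [Matrix.conjTranspose_apply] using this.symm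
  have h1 : (R * R).trace = ∑ j, ∑ p, (starRingEnd ℂ) (R j p) * R j p := by
    rw [Matrix.trace]
    refine Finset.sum_congr rfl fun j _ => ?_
    rw [Matrix.diag_apply, Matrix.mul_apply]
    exact Finset.sum_congr rfl fun p _ => by rw [hsym j p]; ring
  rw [h1]
  push_cast
  refine Finset.sum_congr rfl fun j _ => ?_
  rw [sum_conj_mul_self]
  push_cast
  rfl

lemma psd_norm_le_trace {n : Type*} [Fintype n] [DecidableEq n]
    {Q : Matrix n n ℂ} (hQ : Q.PosSemidef) : ‖Q‖ ≤ Q.trace.re := by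
  have ht0 : 0 ≤ Q.trace.re := (Complex.nonneg_iff.mp (trace_psd_nonneg hQ)).1
  rw [Matrix.norm_le_iff ht0]
  intro i j
  have hfro : ((∑ a, ∑ b, ‖Q a b‖ ^ 2 : ℝ)) = (Q * Q).trace.re := by
    rw [trace_mul_self_herm hQ.1, Complex.ofReal_re]
  have hsum : ‖Q i j‖ ^ 2 ≤ ∑ a, ∑ b, ‖Q a b‖ ^ 2 := by
    calc ‖Q i j‖ ^ 2 ≤ ∑ b, ‖Q i b‖ ^ 2 :=
          Finset.single_le_sum (f := fun b => ‖Q i b‖ ^ 2)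
            (fun b _ => sq_nonneg _) (Finset.mem_univ j)
      _ ≤ ∑ a, ∑ b, ‖Q a b‖ ^ 2 :=
          Finset.single_le_sum (f := fun a => ∑ b, ‖Q a b‖ ^ 2)
            (fun a _ => Finset.sum_nonneg fun b _ => sq_nonneg _) (Finset.mem_univ i)
  have h1 : ‖Q i j‖ ^ 2 ≤ Q.trace.re ^ 2 := by
    have h2 := trace_mul_le hQ hQ
    have : ‖Q i j‖ ^ 2 ≤ (Q * Q).trace.re := by rw [← hfro]; exact hsum
    nlinarith
  nlinarith [norm_nonneg (Q i j)]

end Stmt11Aux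

open Stmt11Aux

set_option maxHeartbeats 2000000 in
/-- If `ℱ(X) = Σ A_α X A_αᴴ` is a subnormalized CP map (`Σ A_αᴴA_α ⪯ I`) with an
eigenvalue of modulus `1`, then there is a nonzero PSD fixed point `σ` of `ℱ`. -/
theorem stmt11 {m k : ℕ}
    (A : Fin k → Matrix (Fin m) (Fin m) ℂ)
    (hsub : ((1 : Matrix (Fin m) (Fin m) ℂ) - ∑ α, (A α)ᴴ * A α).PosSemidef)
    (lam : ℂ) (X : Matrix (Fin m) (Fin m) ℂ) (hX : X ≠ 0)
    (heig : (∑ α, A α * X * (A α)ᴴ) = lam • X) (hlam : ‖lam‖ = 1) :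
    ∃ σ : Matrix (Fin m) (Fin m) ℂ, σ.PosSemidef ∧ σ ≠ 0 ∧
      (∑ α, A α * σ * (A α)ᴴ) = σ := by
  classical
  rcases Nat.eq_zero_or_pos m with hm0 | hm
  · refine absurd ?_ hX
    subst hm0
    ext i j
    exact i.elim0
  -- basic objects
  set P : Matrix (Fin m) (Fin m) ℂ := Xᴴ * X with hPdef
  have hP : P.PosSemidef := Matrix.posSemidef_conjTranspose_mul_self X
  set creal : ℝ := P.trace.re with hcreal
  have hPtrace : P.trace = ((creal : ℝ) : ℂ) := (trace_real hP.1).symm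
  have hsumform : P.trace = ((∑ j, ∑ i, ‖X i j‖ ^ 2 : ℝ) : ℂ) := by
    rw [hPdef, Matrix.trace]
    push_cast
    refine Finset.sum_congr rfl fun j _ => ?_
    rw [Matrix.diag_apply, Matrix.mul_apply]
    have hc : ∀ i, Xᴴ j i * X i j = (starRingEnd ℂ) (X i j) * X i j := fun i => by
      rw [Matrix.conjTranspose_apply]
      rfl
    rw [Finset.sum_congr rfl fun i _ => hc i, sum_conj_mul_self]
    push_cast
    rfl
  have hre : creal = ∑ j, ∑ i, ‖X i j‖ ^ 2 := by
    rw [hcreal, hsumform, Complex.ofReal_re]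
  have hcpos : 0 < creal := by
    have hnn : 0 ≤ creal := by
      rw [hre]; positivity
    refine lt_of_le_of_ne hnn fun heq => hX ?_
    have h1 : ∑ j, ∑ i, ‖X i j‖ ^ 2 = 0 := by rw [← hre, ← heq]
    ext i j
    have h2 := (Finset.sum_eq_zero_iff_of_nonneg fun j _ =>
      Finset.sum_nonneg fun i _ => sq_nonneg ‖X i j‖).mp h1 j (Finset.mem_univ j)
    have h3 := (Finset.sum_eq_zero_iff_of_nonneg fun i _ =>
      sq_nonneg ‖X i j‖).mp h2 i (Finset.mem_univ i)
    have h4 : ‖X i j‖ = 0 := by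
      have := sq_eq_zero_iff.mp h3
      simpa using this
    simpa using norm_eq_zero.mp h4
  -- eigenvalue iteration
  have heig' : cp A X = lam • X := heig
  have hiter : ∀ N, (cp A)^[N] X = lam ^ N • X := by
    intro N
    induction N with
    | zero => simp
    | succ N ih =>
        rw [Function.iterate_succ_apply', ih, cp_smul, heig', smul_smul, ← pow_succ]
  -- the lower bound on traces of iterates of P
  have hlow : ∀ N, creal / m ≤ ((cp A)^[N] P).trace.re := by
    have hCC : (Matrix.fromBlocks (1 : Matrix (Fin m) (Fin m) ℂ) X 0 0)ᴴ *
        Matrix.fromBlocks 1 X 0 0 = Matrix.fromBlocks 1 X Xᴴ P := by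
      rw [Matrix.fromBlocks_conjTranspose, Matrix.fromBlocks_multiply]
      simp [hPdef]
    have hM0 : (Matrix.fromBlocks (1 : Matrix (Fin m) (Fin m) ℂ) X Xᴴ P).PosSemidef := by
      rw [← hCC]
      exact Matrix.posSemidef_conjTranspose_mul_self _
    intro N
    have hMn := cp_iter_psd (fun α => Matrix.fromBlocks (A α) 0 0 (A α)) hM0 N
    have hkey := key_cs hMn X
    rw [cp_iter_block A 1 X Xᴴ P N, Matrix.toBlocks_fromBlocks₁₂,
      Matrix.toBlocks_fromBlocks₁₁, Matrix.toBlocks_fromBlocks₂₂, hiter N] at hkey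
    -- compute the left side
    have hLHS : ‖(Xᴴ * (lam ^ N • X)).trace‖ ^ 2 = creal ^ 2 := by
      rw [Matrix.mul_smul, Matrix.trace_smul, smul_eq_mul, ← hPdef, hPtrace, norm_mul,
        norm_pow, hlam, one_pow, one_mul, Complex.norm_real]
      rw [Real.norm_eq_abs, abs_of_nonneg hcpos.le]
    rw [hLHS] at hkey
    -- bound the first factor
    have hHpsd : ((cp A)^[N] (1 : Matrix (Fin m) (Fin m) ℂ)).PosSemidef :=
      cp_iter_psd A Matrix.PosSemidef.one N
    have hHtr : ((cp A)^[N] (1 : Matrix (Fin m) (Fin m) ℂ)).trace.re ≤ m := by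
      have := cp_iter_trace_le A hsub Matrix.PosSemidef.one N
      rwa [Matrix.trace_one, show ((Fintype.card (Fin m) : ℂ)).re = m by simp] at this
    have hcyc : (Xᴴ * (cp A)^[N] (1 : Matrix (Fin m) (Fin m) ℂ) * X).trace
        = (X * Xᴴ * (cp A)^[N] (1 : Matrix (Fin m) (Fin m) ℂ)).trace :=
      Matrix.trace_mul_cycle Xᴴ ((cp A)^[N] 1) X
    have hfac1 : (Xᴴ * (cp A)^[N] (1 : Matrix (Fin m) (Fin m) ℂ) * X).trace.re
        ≤ creal * m := by
      rw [hcyc]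
      have h1 := trace_mul_le (Matrix.posSemidef_self_mul_conjTranspose X) hHpsd
      have h2 : (X * Xᴴ).trace.re = creal := by
        rw [Matrix.trace_mul_comm, ← hPdef, ← hcreal]
      rw [h2] at h1
      calc (X * Xᴴ * (cp A)^[N] (1 : Matrix (Fin m) (Fin m) ℂ)).trace.re
          ≤ creal * ((cp A)^[N] (1 : Matrix (Fin m) (Fin m) ℂ)).trace.re := h1
        _ ≤ creal * m := by
            exact mul_le_mul_of_nonneg_left hHtr hcpos.le
    have hf2nn : 0 ≤ ((cp A)^[N] P).trace.re :=
      (Complex.nonneg_iff.mp (trace_psd_nonneg (cp_iter_psd A hP N))).1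
    have hmR : (0 : ℝ) < m := by exact_mod_cast hm
    rw [div_le_iff₀ hmR]
    nlinarith [hkey, hfac1, hcpos]
  -- trace upper bounds
  have hup : ∀ N, ((cp A)^[N] P).trace.re ≤ creal := fun N => cp_iter_trace_le A hsub hP N
  have hTpsd : ∀ N, ((cp A)^[N] P).PosSemidef := fun N => cp_iter_psd A hP N
  -- Cesàro means
  set T : ℕ → Matrix (Fin m) (Fin m) ℂ := fun N => (cp A)^[N] P with hTdef
  set g : ℕ → Matrix (Fin m) (Fin m) ℂ :=
    fun N => ((N : ℂ) + 1)⁻¹ • ∑ n ∈ Finset.range (N + 1), T n with hgdef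
  have hTnorm : ∀ N, ‖T N‖ ≤ creal := fun N => (psd_norm_le_trace (hTpsd N)).trans (hup N)
  have hcoef : ∀ N : ℕ, ((N : ℂ) + 1)⁻¹ = ((((N : ℝ) + 1)⁻¹ : ℝ) : ℂ) := by
    intro N; push_cast; ring
  have hsumnorm : ∀ N, ‖∑ n ∈ Finset.range (N + 1), T n‖ ≤ ((N : ℝ) + 1) * creal := by
    intro N
    refine (norm_sum_le _ _).trans ?_
    calc ∑ n ∈ Finset.range (N + 1), ‖T n‖ ≤ ∑ _n ∈ Finset.range (N + 1), creal :=
          Finset.sum_le_sum fun n _ => hTnorm n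
      _ = ((N : ℝ) + 1) * creal := by
          rw [Finset.sum_const, Finset.card_range, nsmul_eq_mul]
          push_cast
          ring
  have hgnorm : ∀ N, ‖g N‖ ≤ creal := by
    intro N
    have hpos : (0 : ℝ) < (N : ℝ) + 1 := by positivity
    have hg1 : ‖g N‖ = ((N : ℝ) + 1)⁻¹ * ‖∑ n ∈ Finset.range (N + 1), T n‖ := by
      simp only [hgdef]
      rw [norm_smul, hcoef N, Complex.norm_real, Real.norm_eq_abs,
        abs_of_pos (inv_pos.mpr hpos)]
    rw [hg1]
    calc ((N : ℝ) + 1)⁻¹ * ‖∑ n ∈ Finset.range (N + 1), T n‖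
        ≤ ((N : ℝ) + 1)⁻¹ * (((N : ℝ) + 1) * creal) :=
          mul_le_mul_of_nonneg_left (hsumnorm N) (inv_pos.mpr hpos).le
      _ = creal := by field_simp
  haveI : ProperSpace (Matrix (Fin m) (Fin m) ℂ) := FiniteDimensional.proper ℂ _
  have hmem : ∀ N, g N ∈ Metric.closedBall (0 : Matrix (Fin m) (Fin m) ℂ) creal := by
    intro N
    rw [Metric.mem_closedBall, dist_zero_right]
    exact hgnorm N
  obtain ⟨σ, hσmem, φ, hφ, hconv⟩ :=
    (isCompact_closedBall (0 : Matrix (Fin m) (Fin m) ℂ) creal).tendsto_subseq hmem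
  -- linear maps and continuity
  let cpLin : Matrix (Fin m) (Fin m) ℂ →ₗ[ℂ] Matrix (Fin m) (Fin m) ℂ :=
    { toFun := cp A, map_add' := cp_add A, map_smul' := cp_smul A }
  have hcpCont : Continuous (cp A) := cpLin.continuous_of_finiteDimensional
  -- fixed point
  have hTstep : ∀ n, cp A (T n) = T (n + 1) := fun n =>
    (Function.iterate_succ_apply' (cp A) n P).symm
  have hgstep : ∀ N, cp A (g N) = g N + ((N : ℂ) + 1)⁻¹ • (T (N + 1) - T 0) := by
    intro N
    simp only [hgdef]
    rw [cp_smul, ← smul_add]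
    congr 1
    have hmap : cp A (∑ n ∈ Finset.range (N + 1), T n)
        = ∑ n ∈ Finset.range (N + 1), cp A (T n) :=
      map_sum cpLin T (Finset.range (N + 1))
    rw [hmap, Finset.sum_congr rfl fun n _ => hTstep n]
    have h1 := Finset.sum_range_succ' T (N + 1)
    have h2 := Finset.sum_range_succ T (N + 1)
    have h3 : ∑ n ∈ Finset.range (N + 1), T (n + 1) + T 0
        = ∑ n ∈ Finset.range (N + 1), T n + T (N + 1) := by rw [← h1, h2]
    have h4 := eq_sub_of_add_eq h3
    rw [h4]
    abel
  have herr : Filter.Tendsto (fun j => cp A (g (φ j)) - g (φ j)) Filter.atTop (nhds 0) := by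
    have hb : ∀ N, ‖cp A (g N) - g N‖ ≤ 2 * creal / ((N : ℝ) + 1) := by
      intro N
      have hpos : (0 : ℝ) < (N : ℝ) + 1 := by positivity
      rw [hgstep N, add_sub_cancel_left, norm_smul, hcoef N, Complex.norm_real,
        Real.norm_eq_abs, abs_of_pos (inv_pos.mpr hpos)]
      have hd : ‖T (N + 1) - T 0‖ ≤ 2 * creal := by
        have ha := hTnorm (N + 1)
        have hb' := hTnorm 0
        have := norm_sub_le (T (N + 1)) (T 0)
        linarith
      calc ((N : ℝ) + 1)⁻¹ * ‖T (N + 1) - T 0‖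
          ≤ ((N : ℝ) + 1)⁻¹ * (2 * creal) :=
            mul_le_mul_of_nonneg_left hd (inv_pos.mpr hpos).le
        _ = 2 * creal / ((N : ℝ) + 1) := by rw [div_eq_inv_mul]
    have hbnd : Filter.Tendsto (fun N : ℕ => 2 * creal / ((N : ℝ) + 1))
        Filter.atTop (nhds 0) := by
      have h0 := tendsto_const_div_atTop_nhds_zero_nat (2 * creal)
      have h2 := h0.comp (Filter.tendsto_add_atTop_nat 1)
      have : (fun n : ℕ => 2 * creal / ((n + 1 : ℕ) : ℝ))
          = fun n : ℕ => 2 * creal / ((n : ℝ) + 1) := by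
        funext n
        push_cast
        ring
      rwa [Function.comp_def, this] at h2
    have herr0 : Filter.Tendsto (fun N => cp A (g N) - g N) Filter.atTop (nhds 0) :=
      squeeze_zero_norm hb hbnd
    exact herr0.comp hφ.tendsto_atTop
  have hfix : cp A σ = σ := by
    have h1 : Filter.Tendsto (fun j => cp A (g (φ j))) Filter.atTop (nhds σ) := by
      have heq : (fun j => cp A (g (φ j)))
          = fun j => g (φ j) + (cp A (g (φ j)) - g (φ j)) := by
        funext j
        abel
      rw [heq]
      have := hconv.add herr
      rwa [add_zero] at this
    have h2 : Filter.Tendsto (fun j => cp A (g (φ j))) Filter.atTop (nhds (cp A σ)) :=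
      (hcpCont.tendsto σ).comp hconv
    exact tendsto_nhds_unique h2 h1
  -- hermitian
  have hent : ∀ i j, Filter.Tendsto (fun l => g (φ l) i j) Filter.atTop (nhds (σ i j)) := by
    intro i j
    let L : Matrix (Fin m) (Fin m) ℂ →ₗ[ℂ] ℂ :=
      { toFun := fun Z => Z i j, map_add' := fun _ _ => rfl, map_smul' := fun _ _ => rfl }
    exact ((L.continuous_of_finiteDimensional).tendsto σ).comp hconv
  have hsumherm : ∀ N, (∑ n ∈ Finset.range (N + 1), T n).IsHermitian := by
    intro N
    rw [Matrix.IsHermitian, Matrix.conjTranspose_sum]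
    exact Finset.sum_congr rfl fun n _ => (hTpsd n).1
  have hgherm : ∀ N, (g N).IsHermitian := by
    intro N
    have hc : star ((N : ℂ) + 1)⁻¹ = ((N : ℂ) + 1)⁻¹ := by
      rw [hcoef N]
      simp [Complex.star_def, Complex.conj_ofReal]
    show ((((N : ℂ) + 1)⁻¹ : ℂ) • ∑ n ∈ Finset.range (N + 1), T n).IsHermitian
    rw [Matrix.IsHermitian, Matrix.conjTranspose_smul, hc, (hsumherm N).eq]
  have hherm : σ.IsHermitian := by
    rw [Matrix.IsHermitian]
    ext i j
    rw [Matrix.conjTranspose_apply]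
    have h2 : Filter.Tendsto (fun l => star (g (φ l) j i)) Filter.atTop
        (nhds (star (σ j i))) := (continuous_star.tendsto _).comp (hent j i)
    have h3 : ∀ l, star (g (φ l) j i) = g (φ l) i j := by
      intro l
      have := congrFun (congrFun (hgherm (φ l)).eq i) j
      simpa [Matrix.conjTranspose_apply] using this
    simp only [h3] at h2
    exact tendsto_nhds_unique h2 (hent i j)
  -- quadratic form
  have hquad : ∀ y : Fin m → ℂ, 0 ≤ dotProduct (star y) (σ *ᵥ y) := by
    intro y
    let L : Matrix (Fin m) (Fin m) ℂ →ₗ[ℂ] ℂ :=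
      { toFun := fun Z => dotProduct (star y) (Z *ᵥ y),
        map_add' := fun Z W => by
          show dotProduct (star y) ((Z + W) *ᵥ y) = _
          rw [Matrix.add_mulVec, dotProduct_add],
        map_smul' := fun c Z => by
          show dotProduct (star y) ((c • Z) *ᵥ y) = _
          rw [Matrix.smul_mulVec, dotProduct_smul]
          rfl }
    have hconv2 : Filter.Tendsto (fun l => L (g (φ l))) Filter.atTop (nhds (L σ)) :=
      ((L.continuous_of_finiteDimensional).tendsto σ).comp hconv
    have hnn : ∀ N, 0 ≤ L (g N) := by
      intro N
      show 0 ≤ dotProduct (star y) ((((N : ℂ) + 1)⁻¹ •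
        ∑ n ∈ Finset.range (N + 1), T n) *ᵥ y)
      rw [Matrix.smul_mulVec, dotProduct_smul, smul_eq_mul]
      refine mul_nonneg ?_ ?_
      · rw [hcoef N]
        rw [Complex.zero_le_real]
        positivity
      · have hps : (∑ n ∈ Finset.range (N + 1), T n).PosSemidef := by
          refine Finset.sum_induction _ _ (fun a b ha hb => ha.add hb)
            Matrix.PosSemidef.zero ?_
          exact fun n _ => hTpsd n
        exact hps.dotProduct_mulVec_nonneg y
    have hreT : Filter.Tendsto (fun l => (L (g (φ l))).re) Filter.atTop
        (nhds (L σ).re) := (Complex.continuous_re.tendsto _).comp hconv2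
    have himT : Filter.Tendsto (fun l => (L (g (φ l))).im) Filter.atTop
        (nhds (L σ).im) := (Complex.continuous_im.tendsto _).comp hconv2
    have hre : 0 ≤ (L σ).re :=
      ge_of_tendsto hreT (Filter.Eventually.of_forall fun l =>
        (Complex.nonneg_iff.mp (hnn (φ l))).1)
    have him0 : (fun l => (L (g (φ l))).im) = fun _ => (0 : ℝ) :=
      funext fun l => ((Complex.nonneg_iff.mp (hnn (φ l))).2).symm
    rw [him0] at himT
    have him : (L σ).im = 0 := tendsto_nhds_unique himT tendsto_const_nhds
    exact Complex.nonneg_iff.mpr ⟨hre, him.symm⟩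
  -- nonzero
  have hne : σ ≠ 0 := by
    have htrL := (Matrix.traceLinearMap (Fin m) ℂ ℂ).continuous_of_finiteDimensional
    have htr_tendsto : Filter.Tendsto (fun l => (g (φ l)).trace) Filter.atTop
        (nhds σ.trace) := (htrL.tendsto σ).comp hconv
    have hgtr : ∀ N, creal / m ≤ (g N).trace.re := by
      intro N
      have hpos : (0 : ℝ) < (N : ℝ) + 1 := by positivity
      show creal / m ≤ ((((N : ℂ) + 1)⁻¹ •
        ∑ n ∈ Finset.range (N + 1), T n).trace).re
      rw [Matrix.trace_smul, hcoef N, smul_eq_mul]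
      have hretr : (((((N : ℝ) + 1)⁻¹ : ℝ) : ℂ) *
          (∑ n ∈ Finset.range (N + 1), T n).trace).re
          = ((N : ℝ) + 1)⁻¹ * ((∑ n ∈ Finset.range (N + 1), T n).trace).re :=
        Complex.re_ofReal_mul _ _
      rw [hretr, Matrix.trace_sum]
      have hsre : ((N : ℝ) + 1) * (creal / m)
          ≤ (∑ n ∈ Finset.range (N + 1), (T n).trace).re := by
        rw [Complex.re_sum]
        calc ((N : ℝ) + 1) * (creal / m)
            = ∑ _n ∈ Finset.range (N + 1), creal / m := by
              rw [Finset.sum_const, Finset.card_range, nsmul_eq_mul]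
              push_cast
              ring
          _ ≤ ∑ n ∈ Finset.range (N + 1), ((T n).trace).re :=
              Finset.sum_le_sum fun n _ => hlow n
      calc creal / m = ((N : ℝ) + 1)⁻¹ * (((N : ℝ) + 1) * (creal / m)) := by
            field_simp
        _ ≤ ((N : ℝ) + 1)⁻¹ * (∑ n ∈ Finset.range (N + 1), (T n).trace).re :=
            mul_le_mul_of_nonneg_left hsre (inv_pos.mpr hpos).le
    have hreT : Filter.Tendsto (fun l => ((g (φ l)).trace).re) Filter.atTop
        (nhds (σ.trace).re) := (Complex.continuous_re.tendsto _).comp htr_tendsto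
    have hge : creal / m ≤ (σ.trace).re :=
      ge_of_tendsto hreT (Filter.Eventually.of_forall fun l => hgtr (φ l))
    intro h0
    rw [h0] at hge
    simp only [Matrix.trace_zero, Complex.zero_re] at hge
    have hmR : (0 : ℝ) < m := by exact_mod_cast hm
    have : 0 < creal / m := div_pos hcpos hmR
    linarith
  exact ⟨σ, Matrix.PosSemidef.of_dotProduct_mulVec_nonneg hherm hquad, hne, hfix⟩
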